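/- Let K be a finite field of characteristic 2, G a finite group, and (V,Q) an anisotropic non-degenerate equivariant quadratic KG-module whose socle is a direct sum of trivial modules. Then dim_K(soc V) ≤ 2; if dim = 2 then soc V is a non-degenerate orthogonal summand isometric to N(K) and equals V; if dim = 1 then soc V = ⟨e⟩ with Q(e) ≠ 0 and V is indecomposable. -/

import Mathlib

open QuadraticMap

variable {K : Type*} [Field K] {G : Type*} [Group G]
variable {V W : Type*} [AddCommGroup V] [Module K V] [AddCommGroup W] [Module K W]

/-- `U` is a `KG`-submodule, i.e. invariant under the representation `ρ`. -/
def IsSubrep (ρ : Representation K G V) (U : Submodule K V) : Prop :=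
  ∀ g : G, ∀ v ∈ U, ρ g v ∈ U

/-- The quadratic form `Q` is `G`-invariant. -/
def GInvariantQF (ρ : Representation K G V) (Q : QuadraticForm K V) : Prop :=
  ∀ g v, Q (ρ g v) = Q v

/-- Orthogonal complement of a submodule with respect to the polarization of `Q`. -/
def qperp (Q : QuadraticForm K V) (U : Submodule K V) : Submodule K V :=
  LinearMap.BilinForm.orthogonal Q.polarBilin U

/-- `Q` is non-degenerate: the radical of its polarization is zero. -/
def QNondeg (Q : QuadraticForm K V) : Prop :=
  LinearMap.BilinForm.Nondegenerate Q.polarBilin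

/-- `(V, Q)` is metabolic: there is a `KG`-submodule `N` with `N = N^⊥` and `Q(N) = 0`. -/
def Metabolic (ρ : Representation K G V) (Q : QuadraticForm K V) : Prop :=
  ∃ N : Submodule K V, IsSubrep ρ N ∧ N = qperp Q N ∧ ∀ v ∈ N, Q v = 0

/-- `(V, Q)` is anisotropic: `Q` does not vanish on any non-zero `KG`-submodule. -/
def AnisotropicRep (ρ : Representation K G V) (Q : QuadraticForm K V) : Prop :=
  ∀ U : Submodule K V, IsSubrep ρ U → (∀ v ∈ U, Q v = 0) → U = ⊥

/-- The product (orthogonal direct sum) of two representations. -/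
def prodRep (ρ : Representation K G V) (σ : Representation K G W) :
    Representation K G (V × W) :=
  ⟨⟨fun g => (ρ g).prodMap (σ g), by ext v <;> simp⟩, fun g h => by ext v <;> simp⟩

/-- `V` is a simple `KG`-module. -/
def SimpleRep (ρ : Representation K G V) : Prop :=
  Nontrivial V ∧ ∀ U : Submodule K V, IsSubrep ρ U → U = ⊥ ∨ U = ⊤

/-- `V` is a self-dual `KG`-module. -/
def SelfDualRep (ρ : Representation K G V) : Prop :=
  ∃ f : V ≃ₗ[K] Module.Dual K V, ∀ g v, f (ρ g v) = ρ.dual g (f v)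

/-- The socle: the sum of all simple `KG`-submodules. -/
def socleRep (ρ : Representation K G V) : Submodule K V :=
  sSup {U : Submodule K V | IsSubrep ρ U ∧ U ≠ ⊥ ∧
    ∀ U' : Submodule K V, U' ≤ U → IsSubrep ρ U' → U' = ⊥ ∨ U' = U}

section Aux14

open MvPolynomial

lemma aux14_exists_sq [Fintype K] (h2 : ringChar K = 2) (a : K) : ∃ c : K, c * c = a := by
  haveI : CharP K 2 := h2 ▸ ringChar.charP K
  have h2' : (2 : K) = 0 := by exact_mod_cast CharP.cast_eq_zero K 2
  have hinj : Function.Injective (fun x : K => x * x) := by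
    intro x y hxy
    have hxy' : x * x = y * y := hxy
    have h : (x - y) * (x - y) = 0 := by
      calc (x-y)*(x-y) = x*x - 2*(x*y) + y*y := by ring
        _ = y*y - 2*(x*y) + y*y := by rw [hxy']
        _ = 2*(y*y) - 2*(x*y) := by ring
        _ = 0 := by rw [h2']; ring
    exact sub_eq_zero.mp (mul_self_eq_zero.mp h)
  exact (Finite.injective_iff_surjective.mp hinj) a

lemma aux14_minimal_le_socle [Fintype K] [FiniteDimensional K V] (ρ : Representation K G V)
    (U : Submodule K V) (hU : IsSubrep ρ U) (hne : U ≠ ⊥) :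
    ∃ Wm : Submodule K V, Wm ≤ U ∧ Wm ≠ ⊥ ∧ Wm ≤ socleRep ρ := by
  haveI : Finite V := Module.finite_of_finite K
  have wf : WellFounded ((· < ·) : Submodule K V → Submodule K V → Prop) := wellFounded_lt
  set S : Set (Submodule K V) := {W' | W' ≤ U ∧ IsSubrep ρ W' ∧ W' ≠ ⊥} with hS
  obtain ⟨Wm, hWS, hmin⟩ := wf.has_min S ⟨U, le_rfl, hU, hne⟩
  refine ⟨Wm, hWS.1, hWS.2.2, le_sSup ?_⟩
  refine ⟨hWS.2.1, hWS.2.2, fun U' hle hsub => ?_⟩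
  by_cases h : U' = ⊥
  · exact Or.inl h
  · have hmem : U' ∈ S := ⟨hle.trans hWS.1, hsub, h⟩
    exact Or.inr (hle.lt_or_eq.resolve_left (fun hlt => hmin U' hmem hlt))

lemma aux14_polar_formula (Q : QuadraticForm K V) (x y : V) :
    Q (x + y) = Q x + Q y + polar Q x y := by
  simp [QuadraticMap.polar]

lemma aux14_finrank_le_two [Fintype K] (h2 : ringChar K = 2) [FiniteDimensional K V]
    (Q : QuadraticForm K V) (U : Submodule K V)
    (h : ∀ v ∈ U, Q v = 0 → v = 0) : Module.finrank K ↥U ≤ 2 := by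
  by_contra hgt
  push_neg at hgt
  obtain ⟨w, hw⟩ := exists_linearIndependent_of_le_finrank
    (show 3 ≤ Module.finrank K ↥U by omega)
  set v : Fin 3 → V := fun i => (w i : V) with hv_def
  have hv : LinearIndependent K v := hw.map' U.subtype (Submodule.ker_subtype U)
  haveI : CharP K 2 := h2 ▸ ringChar.charP K
  classical
  set f : MvPolynomial (Fin 3) K :=
    C (Q (v 0)) * (X 0 * X 0) + C (Q (v 1)) * (X 1 * X 1) + C (Q (v 2)) * (X 2 * X 2) +
    C (polar Q (v 0) (v 1)) * (X 0 * X 1) + C (polar Q (v 0) (v 2)) * (X 0 * X 2) +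
    C (polar Q (v 1) (v 2)) * (X 1 * X 2) with hf_def
  have heval : ∀ x : Fin 3 → K, eval x f = Q (x 0 • v 0 + x 1 • v 1 + x 2 • v 2) := by
    intro x
    rw [aux14_polar_formula Q (x 0 • v 0 + x 1 • v 1) (x 2 • v 2),
      aux14_polar_formula Q (x 0 • v 0) (x 1 • v 1)]
    simp only [hf_def, QuadraticMap.map_smul, polar_add_left, polar_smul_left,
      polar_smul_right, smul_eq_mul, map_add, map_mul, eval_C, eval_X]
    ring
  have key : ∀ (c : K) (i j : Fin 3),
      (C c * (X i * X j) : MvPolynomial (Fin 3) K).totalDegree ≤ 2 := by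
    intro c i j
    refine (totalDegree_mul _ _).trans ?_
    have := totalDegree_C (σ := Fin 3) c
    have hx : (X i * X j : MvPolynomial (Fin 3) K).totalDegree ≤ 2 := by
      refine (totalDegree_mul _ _).trans ?_
      simp [totalDegree_X]
    omega
  have hdeg : f.totalDegree < Fintype.card (Fin 3) := by
    have : f.totalDegree ≤ 2 := by
      rw [hf_def]
      refine (totalDegree_add _ _).trans (max_le ?_ (key _ _ _))
      refine (totalDegree_add _ _).trans (max_le ?_ (key _ _ _))
      refine (totalDegree_add _ _).trans (max_le ?_ (key _ _ _))
      refine (totalDegree_add _ _).trans (max_le ?_ (key _ _ _))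
      exact (totalDegree_add _ _).trans (max_le (key _ _ _) (key _ _ _))
    simpa using Nat.lt_of_le_of_lt this (by norm_num)
  have hdvd := char_dvd_card_solutions 2 hdeg
  have hz : eval (0 : Fin 3 → K) f = 0 := by rw [heval]; simp
  haveI : Nonempty {x : Fin 3 → K // eval x f = 0} := ⟨⟨0, hz⟩⟩
  have hcard : 2 ≤ Fintype.card {x : Fin 3 → K // eval x f = 0} :=
    Nat.le_of_dvd Fintype.card_pos hdvd
  haveI : Nontrivial {x : Fin 3 → K // eval x f = 0} :=
    Fintype.one_lt_card_iff_nontrivial.mp hcard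
  obtain ⟨x, hx⟩ := exists_ne (⟨0, hz⟩ : {x : Fin 3 → K // eval x f = 0})
  have hxne : x.1 ≠ 0 := fun h0 => hx (Subtype.ext h0)
  set u : V := x.1 0 • v 0 + x.1 1 • v 1 + x.1 2 • v 2 with hu_def
  have hu : Q u = 0 := by rw [hu_def, ← heval]; exact x.2
  have humem : u ∈ U := by
    refine Submodule.add_mem _ (Submodule.add_mem _ ?_ ?_) ?_ <;>
      exact U.smul_mem _ (w _).2
  have hu0 : u = 0 := h u humem hu
  have hall := Fintype.linearIndependent_iff.mp hv x.1 (by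
    rw [Fin.sum_univ_three]; exact hu0)
  exact hxne (funext hall)

end Aux14

theorem stmt14 [Fintype K] (h2 : ringChar K = 2) [Finite G] [FiniteDimensional K V]
    (ρ : Representation K G V) (Q : QuadraticForm K V)
    (hinv : GInvariantQF ρ Q) (hnd : QNondeg Q) (han : AnisotropicRep ρ Q)
    (htriv : ∀ g, ∀ v ∈ socleRep ρ, ρ g v = v) :
    Module.finrank K ↥(socleRep ρ) ≤ 2 ∧
    (Module.finrank K ↥(socleRep ρ) = 2 →
      socleRep ρ = ⊤ ∧
      (∀ v ∈ socleRep ρ, (∀ w ∈ socleRep ρ, polar Q v w = 0) → v = 0) ∧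
      ∃ (α : K) (b : Module.Basis (Fin 2) K V),
        Irreducible (Polynomial.X ^ 2 + Polynomial.X + Polynomial.C α) ∧
        Q (b 0) = α ∧ Q (b 1) = 1 ∧ polar Q (b 1) (b 0) = 1) ∧
    (Module.finrank K ↥(socleRep ρ) = 1 →
      (∃ e : V, socleRep ρ = Submodule.span K {e} ∧ Q e ≠ 0) ∧
      ¬∃ U₁ U₂ : Submodule K V, IsSubrep ρ U₁ ∧ IsSubrep ρ U₂ ∧
        U₁ ≠ ⊥ ∧ U₂ ≠ ⊥ ∧ IsCompl U₁ U₂) := by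
  haveI : CharP K 2 := h2 ▸ ringChar.charP K
  have h2' : (2 : K) = 0 := by exact_mod_cast CharP.cast_eq_zero K 2
  set S := socleRep ρ with hS_def
  -- pointwise anisotropy on the socle
  have hA : ∀ v ∈ S, Q v = 0 → v = 0 := by
    intro v hv hQv
    have hspan : Submodule.span K {v} ≤ S := (Submodule.span_singleton_le_iff_mem _ _).mpr hv
    have hsub : IsSubrep ρ (Submodule.span K {v}) := by
      intro g u hu
      rw [htriv g u (hspan hu)]; exact hu
    have hbot := han _ hsub (by
      intro u hu
      obtain ⟨c, rfl⟩ := Submodule.mem_span_singleton.mp hu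
      rw [QuadraticMap.map_smul, hQv]
      simp)
    have : v ∈ (⊥ : Submodule K V) := hbot ▸ Submodule.mem_span_singleton_self v
    simpa using this
  have part1 : Module.finrank K ↥S ≤ 2 := aux14_finrank_le_two h2 Q S hA
  refine ⟨part1, ?_, ?_⟩
  · -- dimension 2 case
    intro h1
    -- the radical of polar on S is trivial
    have hrad : ∀ v ∈ S, (∀ w ∈ S, polar Q v w = 0) → v = 0 := by
      intro v hv hbv
      by_contra hvne
      have hQv : Q v ≠ 0 := fun h0 => hvne (hA v hv h0)
      -- find u ∈ S not in span of v
      have hspan_ne : ¬ S ≤ Submodule.span K {v} := by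
        intro hle
        have h1' := Submodule.finrank_mono hle
        rw [finrank_span_singleton hvne, h1] at h1'
        omega
      obtain ⟨u, hu, hunotin⟩ := Set.not_subset.mp (fun hsub => hspan_ne (fun z hz => hsub hz))
      obtain ⟨c, hc⟩ := aux14_exists_sq h2 (Q u * (Q v)⁻¹)
      have hz_ne : u + c • v ≠ 0 := by
        intro h0
        apply hunotin
        rw [eq_neg_of_add_eq_zero_left h0]
        exact Submodule.neg_mem _ (Submodule.smul_mem _ _ (Submodule.mem_span_singleton_self v))
      have hzmem : u + c • v ∈ S := Submodule.add_mem _ hu (Submodule.smul_mem _ _ hv)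
      have hQz : Q (u + c • v) = 0 := by
        rw [aux14_polar_formula, QuadraticMap.map_smul, polar_comm, polar_smul_left,
          hbv u hu, smul_eq_mul, smul_eq_mul, hc]
        have hmm : Q u * (Q v)⁻¹ * Q v = Q u := by field_simp
        rw [hmm]
        linear_combination Q u * h2'
      exact hz_ne (hA _ hzmem hQz)
    -- qperp S is trivial
    have hperp_bot : qperp Q S = ⊥ := by
      by_contra hne
      have hperp_sub : IsSubrep ρ (qperp Q S) := by
        intro g v hv n hn
        have hn' : ρ g n = n := htriv g n hn
        have hQg : ∀ x, Q (ρ g x) = Q x := hinv g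
        have : polar Q (ρ g n) (ρ g v) = polar Q n v := by
          simp only [QuadraticMap.polar, ← map_add, hQg]
        have h0 := hv n hn
        rw [polarBilin_apply_apply] at h0 ⊢
        rw [← hn', this, h0]
      obtain ⟨Wm, hW1, hW2, hW3⟩ := aux14_minimal_le_socle ρ (qperp Q S) hperp_sub hne
      obtain ⟨z, hzW, hzne⟩ := Submodule.ne_bot_iff Wm |>.mp hW2
      have hzS : z ∈ S := hW3 hzW
      have hzperp : z ∈ qperp Q S := hW1 hzW
      refine hzne (hrad z hzS ?_)
      intro u hu
      rw [polar_comm]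
      have := hzperp u hu
      rwa [polarBilin_apply_apply] at this
    -- S = ⊤
    have htop : S = ⊤ := by
      let φ : V →ₗ[K] Module.Dual K ↥S := S.subtype.dualMap ∘ₗ Q.polarBilin.flip
      have hφinj : Function.Injective φ := by
        rw [← LinearMap.ker_eq_bot, LinearMap.ker_eq_bot']
        intro v hv0
        have hvperp : v ∈ qperp Q S := by
          intro n hn
          have := congrFun (congrArg (fun ψ : Module.Dual K ↥S => (ψ : ↥S → K)) hv0) ⟨n, hn⟩
          rw [polarBilin_apply_apply]
          simpa [φ, QuadraticMap.polar] using this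
        rw [hperp_bot] at hvperp
        simpa using hvperp
      have hle : Module.finrank K V ≤ Module.finrank K (Module.Dual K ↥S) :=
        LinearMap.finrank_le_finrank_of_injective hφinj
      rw [Subspace.dual_finrank_eq, h1] at hle
      exact Submodule.eq_top_of_finrank_eq (le_antisymm (Submodule.finrank_le S)
        (by omega))
    refine ⟨htop, hrad, ?_⟩
    -- construct the basis
    have hVfr : Module.finrank K V = 2 := by
      rw [← h1, htop, finrank_top]
    have hAV : ∀ v : V, Q v = 0 → v = 0 := fun v hv =>
      hA v (htop ▸ Submodule.mem_top) hv
    haveI : Nontrivial V := by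
      apply Module.nontrivial_of_finrank_pos (R := K)
      omega
    obtain ⟨v, hvne⟩ := exists_ne (0 : V)
    have hQv : Q v ≠ 0 := fun h0 => hvne (hAV v h0)
    obtain ⟨c, hc⟩ := aux14_exists_sq h2 (Q v)⁻¹
    set b1 := c • v with hb1_def
    have hQb1 : Q b1 = 1 := by
      rw [hb1_def, QuadraticMap.map_smul, hc, smul_eq_mul, inv_mul_cancel₀ hQv]
    have hb1ne : b1 ≠ 0 := by
      intro h0
      rw [h0] at hQb1
      simp at hQb1
    have hw : ∃ w : V, polar Q b1 w ≠ 0 := by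
      by_contra hcon
      push_neg at hcon
      exact hb1ne (hnd.1 b1 (fun n => by rw [polarBilin_apply_apply]; exact hcon n))
    obtain ⟨w, hwne⟩ := hw
    set b0 := (polar Q b1 w)⁻¹ • w with hb0_def
    have hB10 : polar Q b1 b0 = 1 := by
      rw [hb0_def, polar_smul_right, smul_eq_mul, inv_mul_cancel₀ hwne]
    have hself : polar Q b1 b1 = 0 := by
      rw [polar_self, two_nsmul, hQb1]
      linear_combination h2'
    have hli : LinearIndependent K ![b0, b1] := by
      rw [linearIndependent_fin2]
      constructor
      · simpa using hb1ne
      · intro a ha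
        simp only [Matrix.cons_val_one, Matrix.head_cons, Matrix.cons_val_zero] at ha
        have : polar Q b1 (a • b1) = 1 := by rw [ha]; exact hB10
        rw [polar_smul_right, hself, smul_eq_mul, mul_zero] at this
        exact one_ne_zero this.symm
    have hcard : Fintype.card (Fin 2) = Module.finrank K V := by simp [hVfr]
    set b := basisOfLinearIndependentOfCardEqFinrank hli hcard with hb_def
    have hb : ⇑b = ![b0, b1] := coe_basisOfLinearIndependentOfCardEqFinrank hli hcard
    have hb0 : b 0 = b0 := by rw [hb]; rfl
    have hb1 : b 1 = b1 := by rw [hb]; rfl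
    refine ⟨Q b0, b, ?_, by rw [hb0], by rw [hb1]; exact hQb1, by rw [hb1, hb0]; exact hB10⟩
    -- irreducibility
    have hroot : ∀ x : K, x ^ 2 + x + Q b0 ≠ 0 := by
      intro x hx
      set z := x • b1 + b0 with hz_def
      have hzne : z ≠ 0 := by
        intro h0
        have : polar Q b1 z = 1 := by
          rw [hz_def, polar_add_right, polar_smul_right, hself, hB10]
          simp
        rw [h0] at this
        simp at this
      have hQz : Q z = 0 := by
        rw [hz_def, aux14_polar_formula, QuadraticMap.map_smul, hQb1,
          polar_smul_left, hB10, smul_eq_mul, smul_eq_mul]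
        linear_combination hx
      exact hzne (hAV z hQz)
    have hp_ndeg : (Polynomial.X ^ 2 + Polynomial.X + Polynomial.C (Q b0) :
        Polynomial K).natDegree = 2 := by
      compute_degree!
    rw [Polynomial.irreducible_iff_roots_eq_zero_of_degree_le_three
      (by rw [hp_ndeg]) (by rw [hp_ndeg]; omega)]
    rw [Multiset.eq_zero_iff_forall_notMem]
    intro r hr
    have hpne : (Polynomial.X ^ 2 + Polynomial.X + Polynomial.C (Q b0) :
        Polynomial K) ≠ 0 := by
      intro h0
      rw [h0] at hp_ndeg
      simp at hp_ndeg
    rw [Polynomial.mem_roots hpne, Polynomial.IsRoot] at hr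
    simp only [Polynomial.eval_add, Polynomial.eval_pow, Polynomial.eval_X,
      Polynomial.eval_C] at hr
    exact hroot r hr
  · -- dimension 1 case
    intro h1
    have hSne : S ≠ ⊥ := by
      intro h0
      rw [h0] at h1
      simp at h1
    obtain ⟨e, heS, hene⟩ := Submodule.ne_bot_iff S |>.mp hSne
    have hspan_le : Submodule.span K {e} ≤ S :=
      (Submodule.span_singleton_le_iff_mem _ _).mpr heS
    have hspan_eq : Submodule.span K {e} = S := by
      apply Submodule.eq_of_le_of_finrank_le hspan_le
      rw [h1, finrank_span_singleton hene]
    constructor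
    · exact ⟨e, hspan_eq.symm, fun h0 => hene (hA e heS h0)⟩
    · rintro ⟨U₁, U₂, hs1, hs2, hn1, hn2, hc⟩
      have hSle : ∀ (U' : Submodule K V), IsSubrep ρ U' → U' ≠ ⊥ → S ≤ U' := by
        intro U' hsub hne
        obtain ⟨Wm, hW1, hW2, hW3⟩ := aux14_minimal_le_socle ρ U' hsub hne
        have hWm_eq : Wm = S := by
          apply Submodule.eq_of_le_of_finrank_le hW3
          rw [h1]
          have : Wm ≠ ⊥ := hW2
          have hpos : 0 < Module.finrank K ↥Wm := by
            rcases Nat.eq_zero_or_pos (Module.finrank K ↥Wm) with h0 | hp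
            · exact absurd (Submodule.finrank_eq_zero.mp h0) this
            · exact hp
          omega
        rw [← hWm_eq]
        exact hW1
      have hle1 := hSle U₁ hs1 hn1
      have hle2 := hSle U₂ hs2 hn2
      have : S ≤ ⊥ := by
        rw [← hc.inf_eq_bot]
        exact le_inf hle1 hle2
      exact hSne (le_bot_iff.mp this)
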